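/- Let G be a discrete group, H a complex Hilbert space, and π a unitary representation of G on H. Equip ℓ²(G) ⊗ H^{⊗n} with the G-action λ_g · (δ_h ⊗ ξ) = δ_{gh} ⊗ π(g)^{⊗n} ξ. Let T be a self-adjoint contraction on H ⊗ H with [T, π(g) ⊗ π(g)] = 0 for all g, and P_{T,n} the associated positivity operators. Then the unitary V_n on ℓ²(G) ⊗ H^{⊗n} defined by V_n(δ_g ⊗ ξ) = δ_g ⊗ π(g^{-1})^{⊗n} ξ is isometric with respect to the twisted inner product ⟨δ_g ⊗ ξ, δ_h ⊗ η⟩_T = δ_{g,h} ⟨ξ, P_{T,n} η⟩, i.e. ⟨V_n u, V_n v⟩_T = ⟨u, v⟩_T for all u, v. -/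

import Mathlib

/-!
STATEMENT 14: Let `G` be a discrete group, `π` a unitary representation of `G` on `H`, and
`T` a self-adjoint contraction on `H ⊗ H` with `[T, π(g) ⊗ π(g)] = 0` for all `g`.  On
`ℓ²(G) ⊗ H^{⊗n}` with the `G`-action `λ_g (δ_h ⊗ ξ) = δ_{gh} ⊗ π(g)^{⊗n} ξ`, the unitary
`V_n (δ_g ⊗ ξ) = δ_g ⊗ π(g⁻¹)^{⊗n} ξ` is isometric for the twisted inner product
`⟨δ_g ⊗ ξ, δ_h ⊗ η⟩_T = δ_{g,h} ⟨ξ, P_{T,n} η⟩`, i.e. `⟨V_n u, V_n v⟩_T = ⟨u, v⟩_T` for all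
`u, v`.  Here an element `u` of `ℓ²(G) ⊗ H^{⊗n}` is represented as a function `G → H^{⊗n}`
and `⟨u, v⟩_T = Σ_g ⟨u(g), P_{T,n} v(g)⟩`; `π n g` stands for `π(g)^{⊗n}` on `E n = H^{⊗n}`.
-/

noncomputable section

variable {E : ℕ → Type*} [∀ n, NormedAddCommGroup (E n)] [∀ n, InnerProductSpace ℂ (E n)]
  [∀ n, CompleteSpace (E n)]

/-- `chainT T n k = T₁ T₂ ⋯ T_k`. -/
def chainT (T : ∀ n, ℕ → (E n →L[ℂ] E n)) (n : ℕ) : ℕ → (E n →L[ℂ] E n)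
  | 0 => 1
  | k + 1 => chainT T n k * T n (k + 1)

/-- `Rop T n = 1 + T₁ + T₁T₂ + ⋯ + T₁⋯T_{n-1}`. -/
def Rop (T : ∀ n, ℕ → (E n →L[ℂ] E n)) (n : ℕ) : E n →L[ℂ] E n :=
  ∑ k ∈ Finset.range n, chainT T n k

/-- `P_{T,1} = 1`, `P_{T,n+1} = (1 ⊗ P_{T,n}) R_{T,n+1}`. -/
def Pop (T : ∀ n, ℕ → (E n →L[ℂ] E n))
    (amp : ∀ n, (E n →L[ℂ] E n) →⋆ₐ[ℂ] (E (n + 1) →L[ℂ] E (n + 1))) :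
    ∀ n, E n →L[ℂ] E n
  | 0 => 1
  | n + 1 => amp n (Pop T amp n) * Rop T (n + 1)

theorem stmt14 {G : Type*} [Group G]
    (T : ∀ n, ℕ → (E n →L[ℂ] E n))
    (amp : ∀ n, (E n →L[ℂ] E n) →⋆ₐ[ℂ] (E (n + 1) →L[ℂ] E (n + 1)))
    (hamp : ∀ n k, 1 ≤ k → k ≤ n - 1 → amp n (T n k) = T (n + 1) (k + 1))
    (hsa : ∀ n k, 1 ≤ k → k ≤ n - 1 → IsSelfAdjoint (T n k))
    (hcontr : ∀ n k, 1 ≤ k → k ≤ n - 1 → ‖T n k‖ ≤ 1)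
    -- `π n g = π(g)^{⊗n}` is a unitary representation of `G` on each tensor power
    (π : ∀ n, G → (E n →L[ℂ] E n))
    (hπone : ∀ n, π n 1 = 1)
    (hπmul : ∀ n g h, π n (g * h) = π n g * π n h)
    (hπadj : ∀ n g, ContinuousLinearMap.adjoint (π n g) = π n g⁻¹)
    -- `[T, π(g) ⊗ π(g)] = 0`, transported to every tensor leg
    (hTπ : ∀ n k g, 1 ≤ k → k ≤ n - 1 → Commute (T n k) (π n g))
    -- the ampliation is `G`-compatible: `1 ⊗ A` commutes with `π(g)^{⊗(n+1)}` whenever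
    -- `A` commutes with `π(g)^{⊗n}`
    (hampπ : ∀ n g (A : E n →L[ℂ] E n),
      Commute A (π n g) → Commute (amp n A) (π (n + 1) g)) :
    ∀ n (u v : G → E n),
      ∑ᶠ g, (inner ℂ (π n g⁻¹ (u g)) (Pop T amp n (π n g⁻¹ (v g))) : ℂ) =
        ∑ᶠ g, (inner ℂ (u g) (Pop T amp n (v g)) : ℂ) := by
  -- First: `Pop` commutes with `π n g` for every `n`, `g`.
  have hchain : ∀ n g k, k ≤ n - 1 → Commute (chainT T n k) (π n g) := by
    intro n g k
    induction k with
    | zero => intro _; exact Commute.one_left _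
    | succ k ih =>
      intro hk
      exact (ih (by omega)).mul_left (hTπ n (k + 1) g (by omega) hk)
  have hRop : ∀ n g, Commute (Rop T n) (π n g) := by
    intro n g
    refine Commute.sum_left _ _ _ ?_
    intro k hk
    exact hchain n g k (by have := Finset.mem_range.mp hk; omega)
  have hPop : ∀ n g, Commute (Pop T amp n) (π n g) := by
    intro n
    induction n with
    | zero => intro g; exact Commute.one_left _
    | succ n ih =>
      intro g
      exact (hampπ n g _ (ih g)).mul_left (hRop (n + 1) g)
  intro n u v
  refine finsum_congr fun g => ?_
  have hadj : ContinuousLinearMap.adjoint (π n g⁻¹) = π n g := by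
    rw [hπadj]; simp
  have key : π n g (Pop T amp n (π n g⁻¹ (v g))) = Pop T amp n (v g) := by
    have h1 : π n g (Pop T amp n (π n g⁻¹ (v g)))
        = (π n g * Pop T amp n * π n g⁻¹) (v g) := rfl
    rw [h1, ← (hPop n g).eq, mul_assoc, ← hπmul, mul_inv_cancel, hπone, mul_one]
  rw [← ContinuousLinearMap.adjoint_inner_right (π n g⁻¹), hadj, key]

end
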